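/- Let p be an odd prime and α ≥ 1. The unitary Cayley graph of Z/p^α Z is Ramanujan if and only if α = 1 or α = 2. -/

import Mathlib

open Polynomial

open Polynomial

/-- The unitary Cayley graph of a finite commutative ring `R`. -/
def unitaryCayley (R : Type*) [CommRing R] [Fintype R] [DecidableEq R] : SimpleGraph R where
  Adj x y := x ≠ y ∧ IsUnit (x - y)
  symm := by
    refine ⟨fun x y h => ?_⟩
    exact ⟨h.1.symm, by simpa using h.2.neg⟩
  loopless := ⟨fun x h => h.1 rfl⟩

instance unitaryCayley.instDecidableRel (R : Type*) [CommRing R] [Fintype R] [DecidableEq R] :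
    DecidableRel (unitaryCayley R).Adj := fun a b =>
  decidable_of_iff (a ≠ b ∧ ∃ c, (a - b) * c = 1)
    (and_congr Iff.rfl isUnit_iff_exists_inv.symm)

/-- An `r`-regular graph is Ramanujan if every adjacency eigenvalue other than `±r`
has absolute value at most `2 * sqrt (r - 1)`. -/
def IsRamanujan {V : Type*} [Fintype V] [DecidableEq V] (G : SimpleGraph V)
    [DecidableRel G.Adj] (r : ℕ) : Prop :=
  ∀ μ ∈ (SimpleGraph.adjMatrix ℝ G).charpoly.roots,
    |μ| ≠ (r : ℝ) → |μ| ≤ 2 * Real.sqrt ((r : ℝ) - 1)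

/-- The energy of a graph: the sum of absolute values of its adjacency eigenvalues. -/
noncomputable def graphEnergy {V : Type*} [Fintype V] [DecidableEq V] (G : SimpleGraph V)
    [DecidableRel G.Adj] : ℝ :=
  ((SimpleGraph.adjMatrix ℝ G).charpoly.roots.map (fun μ => |μ|)).sum

namespace Stmt12Aux

open Finset Matrix

lemma eval_charpoly' {n : Type*} [Fintype n] [DecidableEq n] (M : Matrix n n ℝ) (μ : ℝ) :
    eval μ M.charpoly = det (μ • (1 : Matrix n n ℝ) - M) := by
  rw [Matrix.charpoly, _root_.eval_det, matPolyEquiv_charmatrix]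
  simp only [eval_sub, eval_X, eval_C]
  congr 1
  ext i j
  simp [Matrix.scalar, Matrix.smul_apply, Matrix.one_apply, Matrix.diagonal,
    Pi.algebraMap_apply, Algebra.algebraMap_self_apply]

section generic
variable {N : Type*} [Fintype N] [DecidableEq N]
set_option linter.unusedSectionVars false

lemma mem_roots_of_eigen (A : Matrix N N ℝ) (μ : ℝ) (v : N → ℝ) (hv : v ≠ 0)
    (h : A *ᵥ v = μ • v) : μ ∈ A.charpoly.roots := by
  rw [Polynomial.mem_roots (A.charpoly_monic.ne_zero), Polynomial.IsRoot, eval_charpoly']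
  refine Matrix.exists_mulVec_eq_zero_iff.mp ⟨v, hv, ?_⟩
  rw [Matrix.sub_mulVec, Matrix.smul_mulVec, Matrix.one_mulVec, h, sub_self]

lemma eigen_of_mem_roots (A : Matrix N N ℝ) (μ : ℝ) (hμ : μ ∈ A.charpoly.roots) :
    ∃ v ≠ 0, A *ᵥ v = μ • v := by
  rw [Polynomial.mem_roots (A.charpoly_monic.ne_zero), Polynomial.IsRoot, eval_charpoly'] at hμ
  obtain ⟨v, hv, hv2⟩ := Matrix.exists_mulVec_eq_zero_iff.mpr hμ
  refine ⟨v, hv, ?_⟩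
  have h3 : μ • v - A *ᵥ v = 0 := by
    have h4 : (μ • (1 : Matrix N N ℝ) - A) *ᵥ v = μ • v - A *ᵥ v := by
      rw [Matrix.sub_mulVec, Matrix.smul_mulVec, Matrix.one_mulVec]
    rw [← h4, hv2]
  rw [sub_eq_zero] at h3
  exact h3.symm

lemma root_cubic (A : Matrix N N ℝ) (m r : ℝ) (hkey : A * (A + m • 1) * (A - r • 1) = 0)
    (μ : ℝ) (hμ : μ ∈ A.charpoly.roots) : μ = 0 ∨ μ = -m ∨ μ = r := by
  obtain ⟨v, hv, hAv⟩ := eigen_of_mem_roots A μ hμ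
  have e1 : (A - r • 1) *ᵥ v = (μ - r) • v := by
    rw [Matrix.sub_mulVec, Matrix.smul_mulVec, Matrix.one_mulVec, hAv, sub_smul]
  have e2 : (A + m • 1) *ᵥ ((μ - r) • v) = ((μ + m) * (μ - r)) • v := by
    rw [Matrix.mulVec_smul, Matrix.add_mulVec, Matrix.smul_mulVec, Matrix.one_mulVec,
      hAv, ← add_smul, smul_smul, mul_comm]
  have e3 : A *ᵥ (((μ + m) * (μ - r)) • v) = (μ * ((μ + m) * (μ - r))) • v := by
    rw [Matrix.mulVec_smul, hAv, smul_smul, mul_comm]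
  have hz0 : (μ * ((μ + m) * (μ - r))) • v = 0 := by
    rw [← e3, ← e2, ← e1, Matrix.mulVec_mulVec, Matrix.mulVec_mulVec, hkey, Matrix.zero_mulVec]
  obtain ⟨i, hi⟩ := Function.ne_iff.mp hv
  have hz : μ * ((μ + m) * (μ - r)) = 0 := by
    by_contra hne
    exact hi (by simpa [hne] using congrFun hz0 i)
  rcases mul_eq_zero.mp hz with h | h
  · exact Or.inl h
  rcases mul_eq_zero.mp h with h | h
  · exact Or.inr (Or.inl (by linarith))
  · exact Or.inr (Or.inr (by linarith))

theorem annihilate (J C : Matrix N N ℝ) (n m : ℝ) (hJJ : J * J = n • J)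
    (hJC : J * C = m • J) (hCJ : C * J = m • J) (hCC : C * C = m • C) :
    (J - C) * ((J - C) + m • 1) * ((J - C) - (n - m) • 1) = 0 := by
  have h1 : (J - C) * ((J - C) + m • 1) = (n - m) • J := by
    rw [mul_add, sub_mul, mul_sub, mul_sub, hJJ, hJC, hCJ, hCC, Matrix.mul_smul,
      Matrix.mul_one]
    module
  rw [h1, Matrix.smul_mul, mul_sub, mul_sub, hJJ, hJC, Matrix.mul_smul, Matrix.mul_one]
  rw [smul_sub]
  module

end generic

def pr (p α : ℕ) (hα : 1 ≤ α) : ZMod (p^α) →+* ZMod p :=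
  ZMod.castHom (dvd_pow_self p (by omega)) (ZMod p)

lemma pr_natCast (p α : ℕ) (hα : 1 ≤ α) (k : ℕ) : pr p α hα (k : ZMod (p^α)) = (k : ZMod p) :=
  map_natCast _ k

lemma pr_surj (p α : ℕ) [NeZero p] (hα : 1 ≤ α) (t : ZMod p) : ∃ c, pr p α hα c = t :=
  ⟨(t.val : ZMod (p^α)), by rw [pr_natCast, ZMod.natCast_rightInverse t]⟩

section main
variable (p α : ℕ) [NeZero p] [NeZero (p ^ α)] (hp : p.Prime) (hα : 1 ≤ α)
set_option linter.unusedSectionVars false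
include hp hα

lemma fiber_card (t : ZMod p) :
    (univ.filter fun y : ZMod (p^α) => pr p α hα y = t).card = p ^ (α - 1) := by
  have key : ∀ t t' : ZMod p,
      (univ.filter fun y : ZMod (p^α) => pr p α hα y = t).card
      = (univ.filter fun y : ZMod (p^α) => pr p α hα y = t').card := by
    intro t t'
    obtain ⟨c, hc⟩ := pr_surj p α hα (t' - t)
    apply Finset.card_bij' (fun y _ => y + c) (fun y _ => y - c)
    · intro a ha
      simp only [mem_filter, mem_univ, true_and] at ha ⊢
      rw [map_add, ha, hc]; ring
    · intro a ha
      simp only [mem_filter, mem_univ, true_and] at ha ⊢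
      rw [map_sub, ha, hc]; ring
    · intros; ring
    · intros; ring
  have hsum : ∑ t : ZMod p, (univ.filter fun y : ZMod (p^α) => pr p α hα y = t).card
      = p ^ α := by
    rw [← Finset.card_eq_sum_card_fiberwise (fun y _ => mem_univ (pr p α hα y))]
    rw [Finset.card_univ, ZMod.card]
  rw [Finset.sum_congr rfl (fun t' _ => key t' t), Finset.sum_const, Finset.card_univ,
    ZMod.card, smul_eq_mul] at hsum
  have h2 : p * (univ.filter fun y : ZMod (p^α) => pr p α hα y = t).card = p * p ^ (α - 1) := by
    rw [hsum, ← pow_succ']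
    congr 1; omega
  exact Nat.eq_of_mul_eq_mul_left hp.pos h2

lemma sum_fiber (g : ZMod p → ℝ) :
    ∑ y : ZMod (p^α), g (pr p α hα y) = (p ^ (α - 1) : ℕ) * ∑ t : ZMod p, g t := by
  rw [← Finset.sum_fiberwise_of_maps_to (fun y _ => mem_univ (pr p α hα y))
    (fun y => g (pr p α hα y))]
  rw [Finset.mul_sum]
  refine Finset.sum_congr rfl fun t _ => ?_
  rw [Finset.sum_congr rfl (fun y hy => by rw [(mem_filter.mp hy).2]), Finset.sum_const,
    fiber_card p α hp hα, nsmul_eq_mul]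

/-- all-ones matrix -/
noncomputable def JJ : Matrix (ZMod (p^α)) (ZMod (p^α)) ℝ := Matrix.of fun _ _ => 1

/-- block indicator matrix -/
noncomputable def CC (hα : 1 ≤ α) : Matrix (ZMod (p^α)) (ZMod (p^α)) ℝ :=
  Matrix.of fun x y => if pr p α hα x = pr p α hα y then 1 else 0

lemma hJJ : JJ p α * JJ p α = ((p^α : ℕ) : ℝ) • JJ p α := by
  ext x z
  simp [JJ, Matrix.mul_apply, ZMod.card]

lemma sum_row_C (x : ZMod (p^α)) : ∑ y, CC p α hα x y = ((p ^ (α-1) : ℕ) : ℝ) := by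
  have := sum_fiber p α hp hα (fun t => if pr p α hα x = t then (1:ℝ) else 0)
  simpa [CC] using this

lemma sum_col_C (z : ZMod (p^α)) : ∑ y, CC p α hα y z = ((p ^ (α-1) : ℕ) : ℝ) := by
  have := sum_fiber p α hp hα (fun t => if t = pr p α hα z then (1:ℝ) else 0)
  simpa [CC] using this

lemma hJC : JJ p α * CC p α hα = ((p ^ (α-1) : ℕ) : ℝ) • JJ p α := by
  ext x z
  simpa [JJ, Matrix.mul_apply] using sum_col_C p α hp hα z

lemma hCJ : CC p α hα * JJ p α = ((p ^ (α-1) : ℕ) : ℝ) • JJ p α := by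
  ext x z
  simpa [JJ, Matrix.mul_apply] using sum_row_C p α hp hα x

lemma hCC : CC p α hα * CC p α hα = ((p ^ (α-1) : ℕ) : ℝ) • CC p α hα := by
  ext x z
  have := sum_fiber p α hp hα
    (fun t => (if pr p α hα x = t then (1:ℝ) else 0) * (if t = pr p α hα z then (1:ℝ) else 0))
  simp only [Matrix.mul_apply, CC, Matrix.of_apply, Matrix.smul_apply, smul_eq_mul]
  rw [this]
  congr 1
  by_cases h : pr p α hα x = pr p α hα z
  · simp [h]
  · rw [Finset.sum_eq_zero, if_neg h]
    intro t _
    by_cases h1 : pr p α hα x = t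
    · rw [← h1]; simp [h]
    · simp [h1]

lemma adj_iff (x y : ZMod (p^α)) :
    (unitaryCayley (ZMod (p^α))).Adj x y ↔ pr p α hα x ≠ pr p α hα y := by
  haveI : Fact (1 < p ^ α) := ⟨by
    calc 1 < p := hp.one_lt
    _ ≤ p ^ α := Nat.le_self_pow (by omega) p⟩
  have hunit : ∀ z : ZMod (p^α), IsUnit z ↔ pr p α hα z ≠ 0 := by
    intro z
    rw [← ZMod.natCast_rightInverse z, ZMod.isUnit_iff_coprime, map_natCast,
      Ne, ZMod.natCast_eq_zero_iff]
    rw [Nat.coprime_pow_right_iff (by omega), Nat.coprime_comm, hp.coprime_iff_not_dvd]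
  constructor
  · rintro ⟨-, hu⟩
    rw [hunit, map_sub, sub_ne_zero] at hu
    exact hu
  · intro h
    have hxy : x ≠ y := fun e => h (by rw [e])
    refine ⟨hxy, ?_⟩
    rw [hunit, map_sub, sub_ne_zero]
    exact h

lemma adjMatrix_eq :
    SimpleGraph.adjMatrix ℝ (unitaryCayley (ZMod (p^α))) = JJ p α - CC p α hα := by
  ext x y
  by_cases h : pr p α hα x = pr p α hα y
  · have hna : ¬ (unitaryCayley (ZMod (p^α))).Adj x y := by
      rw [adj_iff p α hp hα]; simpa using h
    simp [hna, h, JJ, CC]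
  · have ha : (unitaryCayley (ZMod (p^α))).Adj x y := by rw [adj_iff p α hp hα]; exact h
    simp [ha, h, JJ, CC]

/-- the eigenvector for `-p^(α-1)` -/
noncomputable def ev (hα : 1 ≤ α) : ZMod (p^α) → ℝ :=
  fun y => if pr p α hα y = 0 then ((p : ℝ) - 1) else -1

lemma ev_eigen :
    (JJ p α - CC p α hα) *ᵥ ev p α hα = (-((p ^ (α-1) : ℕ) : ℝ)) • ev p α hα := by
  funext x
  have hg : ∀ t : ZMod p, (if t = 0 then ((p:ℝ) - 1) else -1)
      = (if t = 0 then (p:ℝ) else 0) - 1 := by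
    intro t; by_cases h : t = 0 <;> simp [h]
  have hsum : ∑ y : ZMod (p^α), ev p α hα y = 0 := by
    have := sum_fiber p α hp hα (fun t => if t = 0 then ((p:ℝ) - 1) else -1)
    rw [show (fun y : ZMod (p^α) => ev p α hα y)
        = fun y => (fun t => if t = 0 then ((p:ℝ) - 1) else -1) (pr p α hα y) from rfl, this]
    rw [Finset.sum_congr rfl (fun t _ => hg t), Finset.sum_sub_distrib, Finset.sum_ite_eq'
      univ (0 : ZMod p) (fun _ => (p:ℝ)), Finset.sum_const, Finset.card_univ, ZMod.card]
    simp
  have hCsum : ∑ y, CC p α hα x y * ev p α hα y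
      = ((p ^ (α-1) : ℕ) : ℝ) * ev p α hα x := by
    have := sum_fiber p α hp hα
      (fun t => (if pr p α hα x = t then (1:ℝ) else 0) * (if t = 0 then ((p:ℝ) - 1) else -1))
    rw [show (fun y : ZMod (p^α) => CC p α hα x y * ev p α hα y)
        = fun y => (fun t => (if pr p α hα x = t then (1:ℝ) else 0)
          * (if t = 0 then ((p:ℝ) - 1) else -1)) (pr p α hα y) from rfl, this]
    congr 1
    rw [Finset.sum_eq_single (pr p α hα x)]
    · simp [ev]
    · intro t _ ht
      simp [Ne.symm ht]
    · simp
  simp only [Pi.sub_apply, Pi.smul_apply, Matrix.sub_mulVec, Matrix.mulVec, dotProduct,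
    smul_eq_mul, Matrix.sub_apply, sub_mul]
  rw [Finset.sum_sub_distrib, hCsum]
  have hJ : ∑ y, JJ p α x y * ev p α hα y = ∑ y : ZMod (p^α), ev p α hα y := by
    simp [JJ]
  rw [hJ, hsum]
  ring

lemma totient_cast : (((p^α).totient : ℝ)) = ((p^α : ℕ) : ℝ) - ((p^(α-1) : ℕ) : ℝ) := by
  rw [Nat.totient_prime_pow hp (by omega)]
  have hpa : (p:ℝ)^α = (p:ℝ)^(α-1) * p := by
    rw [← pow_succ]; congr 1; omega
  push_cast [Nat.cast_sub hp.one_le]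
  rw [hpa]; ring

end main

end Stmt12Aux

/-- For an odd prime `p` and `α ≥ 1`, the unitary Cayley graph of `ℤ/p^α ℤ` is Ramanujan
iff `α = 1` or `α = 2`. -/
theorem stmt_12 (p α : ℕ) (hp : p.Prime) (hodd : p ≠ 2) (hα : 1 ≤ α) :
    haveI : NeZero (p ^ α) := ⟨pow_ne_zero _ hp.pos.ne'⟩
    (IsRamanujan (unitaryCayley (ZMod (p ^ α))) ((p ^ α).totient) ↔ α = 1 ∨ α = 2) := by
  haveI : NeZero (p ^ α) := ⟨pow_ne_zero _ hp.pos.ne'⟩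
  haveI : NeZero p := ⟨hp.pos.ne'⟩
  open Stmt12Aux Matrix in
  show IsRamanujan (unitaryCayley (ZMod (p ^ α))) ((p ^ α).totient) ↔ α = 1 ∨ α = 2
  set m : ℝ := ((p^(α-1) : ℕ) : ℝ) with hm
  set nn : ℝ := ((p^α : ℕ) : ℝ) with hnn
  have hp3 : (3:ℝ) ≤ (p:ℝ) := by
    have : 3 ≤ p := by
      rcases hp.eq_one_or_self_of_dvd 1 (one_dvd p) with h|h <;>
      · have := hp.two_le; omega
    exact_mod_cast this
  have hm1 : (1:ℝ) ≤ m := by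
    rw [hm]
    exact_mod_cast Nat.one_le_iff_ne_zero.mpr (pow_ne_zero _ hp.pos.ne')
  have hnm : nn = m * p := by
    rw [hm, hnn]
    push_cast
    rw [← pow_succ]
    congr 1
    omega
  have hAeq := Stmt12Aux.adjMatrix_eq p α hp hα
  have hkey := Stmt12Aux.annihilate (Stmt12Aux.JJ p α) (Stmt12Aux.CC p α hα) nn m
    (Stmt12Aux.hJJ p α hp hα) (Stmt12Aux.hJC p α hp hα) (Stmt12Aux.hCJ p α hp hα)
    (Stmt12Aux.hCC p α hp hα)
  have htot := Stmt12Aux.totient_cast p α hp hα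
  constructor
  · -- Ramanujan → α ≤ 2
    intro hRam
    by_contra hcon
    have hα3 : 3 ≤ α := by omega
    have hmem : -m ∈ (SimpleGraph.adjMatrix ℝ (unitaryCayley (ZMod (p^α)))).charpoly.roots := by
      rw [hAeq]
      refine Stmt12Aux.mem_roots_of_eigen _ _ _ (fun h0 => ?_) (Stmt12Aux.ev_eigen p α hp hα)
      have h1 : ((p:ℝ) - 1) = 0 := by simpa [Stmt12Aux.ev] using congrFun h0 0
      linarith
    have habs : |(-m)| = m := by rw [abs_neg, abs_of_nonneg (by linarith)]
    have hmne : m ≠ ((p^α).totient : ℝ) := by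
      rw [htot, ← hm, ← hnn, hnm]
      nlinarith
    have hle := hRam (-m) hmem (by rw [habs]; exact hmne)
    rw [habs, htot, ← hm, ← hnn] at hle
    -- square it
    have hs0 : (0:ℝ) ≤ nn - m - 1 := by rw [hnm]; nlinarith
    have hsq : m^2 ≤ 4 * (nn - m - 1) := by
      nlinarith [Real.sq_sqrt hs0, Real.sqrt_nonneg (nn - m - 1)]
    -- numeric contradiction for α ≥ 3
    have hppow : (p:ℝ)^2 ≤ m := by
      rw [hm]
      push_cast
      exact pow_le_pow_right₀ (by linarith) (by omega)
    rw [hnm] at hsq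
    nlinarith [mul_le_mul_of_nonneg_left hppow (by linarith : (0:ℝ) ≤ m), sq_nonneg ((p:ℝ) - 2)]
  · -- α ∈ {1,2} → Ramanujan
    intro h12
    intro μ hμ hne
    rw [hAeq] at hμ
    have hcases := Stmt12Aux.root_cubic _ m (nn - m) hkey μ hμ
    have hrnn : ((p^α).totient : ℝ) = nn - m := by rw [htot]
    rcases hcases with h0 | hm' | hr
    · rw [h0, abs_zero]
      positivity
    · -- μ = -m : need m ≤ 2 √(r - 1)
      rw [hm', abs_neg, abs_of_nonneg (by linarith)]
      rw [hrnn]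
      have hsq : m^2 ≤ 4 * (nn - m - 1) := by
        rcases h12 with h1 | h2
        · have hme : m = 1 := by rw [hm, h1]; norm_num
          rw [hme, hnm, hme]; nlinarith
        · have hme : m = (p:ℝ) := by rw [hm, h2]; push_cast; norm_num
          rw [hme, hnm, hme]; nlinarith
      calc m = Real.sqrt (m^2) := by rw [Real.sqrt_sq (by linarith)]
      _ ≤ Real.sqrt (4 * (nn - m - 1)) := Real.sqrt_le_sqrt hsq
      _ = 2 * Real.sqrt (nn - m - 1) := by
          rw [Real.sqrt_mul (by norm_num) (nn - m - 1),
            show (4:ℝ) = 2^2 by norm_num, Real.sqrt_sq (by norm_num)]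
    · exfalso
      apply hne
      rw [hr, hrnn, abs_of_nonneg]
      rw [hnm]
      nlinarith
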